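/- Diagonal evaluation: for q odd and any g >= 1, (1/|P_{2g+1}|) sum over P in P_{2g+1} sum over monic f with deg f <= 2X of tau(f) chi_P(f) / sqrt(|f|) = sum over monic f with deg f <= X of tau(f^2)/|f| + O(X^2 q^{-g+X} ) + error, where the first term comes from f a perfect square (writing f = h^2, chi_P(h^2) = 1 for P not dividing h) and the second from the Weil bound applied to nonsquare f. -/

import Mathlib

open Polynomial
open scoped Classical

set_option linter.unusedSectionVars false
set_option linter.unusedVariables false
set_option maxHeartbeats 1000000

/-- The quadratic residue character modulo `P`. -/
noncomputable def quadChar {Fq : Type} [Field Fq] (P f : Fq[X]) : ℝ :=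
  if P ∣ f then 0
  else if IsSquare (Ideal.Quotient.mk (Ideal.span {P}) f) then 1 else -1

/-- The divisor function on `F_q[x]`. -/
noncomputable def tau {Fq : Type} [Field Fq] (f : Fq[X]) : ℕ :=
  Nat.card {p : Fq[X] × Fq[X] // p.1.Monic ∧ p.2.Monic ∧ p.1 * p.2 = f}

section Aux

lemma DEaux.exists_monic_irreducible_natDegree (Fq : Type) [Field Fq] [Fintype Fq]
    (n : ℕ) (hn : n ≠ 0) :
    ∃ P : Fq[X], P.Monic ∧ Irreducible P ∧ P.natDegree = n := by
  classical
  set q := Fintype.card Fq with hqdef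
  have hq1 : 1 < q := Fintype.one_lt_card
  obtain ⟨p, hpc⟩ := CharP.exists Fq
  have hp : p.Prime := CharP.char_is_prime Fq p
  haveI : Fact p.Prime := ⟨hp⟩
  obtain ⟨k, hpk, hqk⟩ := FiniteField.card Fq p
  set K := SplittingField (X ^ q ^ n - X : Fq[X]) with hK
  haveI : FiniteDimensional Fq K := by dsimp only [K]; infer_instance
  haveI : Finite K := Module.finite_of_finite Fq
  haveI : Fintype K := Fintype.ofFinite K
  haveI : CharP K p := (Algebra.charP_iff Fq K p).mp hpc
  have hqk' : q = p ^ (k : ℕ) := hqk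
  have hpq : p ∣ q ^ n := dvd_pow (by rw [hqdef, hqk]; exact dvd_pow_self p k.ne_zero) hn
  have hsep : Separable (X ^ q ^ n - X : Fq[X]) := galois_poly_separable p _ hpq
  have haux : (X ^ q ^ n - X : Fq[X]) ≠ 0 :=
    FiniteField.X_pow_card_pow_sub_X_ne_zero _ hn hq1
  have hfix : ∀ x : K, x ^ q ^ n = x := by
    have hqn : q ^ n = p ^ (k * n) := by rw [hqk', ← pow_mul]
    let φ : K →+* K := (frobenius K p) ^ (k * n : ℕ)
    have hφ : ∀ x : K, φ x = x ^ q ^ n := by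
      intro x
      have : φ x = (frobenius K p)^[k * n] x := by
        rw [← RingHom.coe_pow]
      rw [this, iterate_frobenius]
      exact (congrArg (fun m => x ^ m) hqn).symm
    let S : Subfield K := RingHom.eqLocusField φ (RingHom.id K)
    have hSmem : ∀ x : K, x ∈ S ↔ x ^ q ^ n = x := by
      intro x
      constructor
      · intro hx
        have : φ x = x := hx
        rwa [hφ] at this
      · intro hx
        show φ x = RingHom.id K x
        rw [hφ, hx]; rfl
    let A : Subalgebra Fq K :=
      { S.toSubring.toSubsemiring with
        algebraMap_mem' := by
          intro a
          show algebraMap Fq K a ∈ S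
          rw [hSmem, ← map_pow, FiniteField.pow_card_pow] }
    have hroot : (X ^ q ^ n - X : Fq[X]).rootSet K ⊆ (A : Set K) := by
      intro x hx
      rw [mem_rootSet_of_ne haux] at hx
      simp only [map_sub, map_pow, aeval_X, sub_eq_zero] at hx
      show x ∈ S
      rw [hSmem]; exact hx
    have htop : (⊤ : Subalgebra Fq K) ≤ A := by
      rw [← SplittingField.adjoin_rootSet (X ^ q ^ n - X : Fq[X])]
      exact Algebra.adjoin_le hroot
    intro x
    have hx : x ∈ A := htop (Algebra.mem_top)
    have : x ∈ S := hx
    rwa [hSmem] at this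
  have hroots : (X ^ q ^ n - X : Fq[X]).rootSet K = Set.univ := by
    rw [Set.eq_univ_iff_forall]
    intro x
    rw [mem_rootSet_of_ne haux]
    simp only [map_sub, map_pow, aeval_X, sub_eq_zero]
    exact hfix x
  have key : Fintype.card ((X ^ q ^ n - X : Fq[X]).rootSet K)
      = (X ^ q ^ n - X : Fq[X]).natDegree :=
    card_rootSet_eq_natDegree hsep (SplittingField.splits _)
  have hdeg : (X ^ q ^ n - X : Fq[X]).natDegree = q ^ n :=
    FiniteField.X_pow_card_pow_sub_X_natDegree_eq _ hn hq1
  have hcardK : Fintype.card K = q ^ n := by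
    rw [hdeg] at key
    rw [← key, ← Nat.card_eq_fintype_card, ← Nat.card_eq_fintype_card,
      Nat.card_coe_set_eq, hroots, Set.ncard_univ]
  have hrank : Module.finrank Fq K = n := by
    have := Module.card_eq_pow_finrank (K := Fq) (V := K)
    rw [hcardK, ← hqdef] at this
    exact (Nat.pow_right_injective hq1 this.symm)
  obtain ⟨α, hα⟩ := Field.exists_primitive_element_of_finite_top Fq K
  have hint : IsIntegral Fq α := IsIntegral.of_finite Fq α
  refine ⟨minpoly Fq α, minpoly.monic hint, minpoly.irreducible hint, ?_⟩
  rw [← IntermediateField.adjoin.finrank hint, hα, IntermediateField.finrank_top', hrank]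

variable {Fq : Type} [Field Fq] [Fintype Fq]

lemma DEaux.monic_coeff_inj {d : ℕ} {f g : Fq[X]} (hf : f.natDegree ≤ d) (hg : g.natDegree ≤ d)
    (h : ∀ i : Fin (d + 1), f.coeff i = g.coeff i) : f = g := by
  ext i
  by_cases hi : i ≤ d
  · exact h ⟨i, Nat.lt_succ_of_le hi⟩
  · push_neg at hi
    rw [coeff_eq_zero_of_natDegree_lt (lt_of_le_of_lt hf hi),
      coeff_eq_zero_of_natDegree_lt (lt_of_le_of_lt hg hi)]

lemma DEaux.finite_monic_le (d : ℕ) : {f : Fq[X] | f.Monic ∧ f.natDegree ≤ d}.Finite := by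
  rw [← Set.finite_coe_iff]
  exact Finite.of_injective
    (fun f => (fun i : Fin (d + 1) => (f : Fq[X]).coeff i))
    (fun f g h => Subtype.ext (DEaux.monic_coeff_inj f.2.2 g.2.2 (fun i => congrFun h i)))

lemma DEaux.finite_P (g : ℕ) :
    {P : Fq[X] | P.Monic ∧ Irreducible P ∧ P.natDegree = 2 * g + 1}.Finite :=
  (DEaux.finite_monic_le (2 * g + 1)).subset (fun P hP => ⟨hP.1, hP.2.2.le⟩)

lemma DEaux.tsumSub_eq_sum {α : Type} {p : α → Prop} (h : {x | p x}.Finite) (f : α → ℝ) :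
    ∑' x : {x // p x}, f x = ∑ x ∈ h.toFinset, f x := by
  haveI : Fintype {x // p x} := h.fintype
  rw [tsum_fintype]
  exact (Finset.sum_subtype h.toFinset (fun x => h.mem_toFinset) f).symm

lemma DEaux.natcard_eq_card {α : Type} {p : α → Prop} (h : {x | p x}.Finite) :
    Nat.card {x // p x} = h.toFinset.card := by
  have h1 : Nat.card {x // p x} = Nat.card ↥{x | p x} := rfl
  rw [h1, Nat.card_coe_set_eq, ← Set.ncard_coe_finset, Set.Finite.coe_toFinset]

lemma DEaux.card_pairs_le (s : Finset (Fq[X] × Fq[X])) (n : ℕ)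
    (hs : ∀ p ∈ s, p.1.Monic ∧ p.2.Monic ∧ p.1.natDegree + p.2.natDegree = n) :
    s.card ≤ (n + 1) * Fintype.card Fq ^ n := by
  classical
  have h := Finset.card_le_card_of_injOn
    (f := fun p : Fq[X] × Fq[X] =>
      ((⟨min p.1.natDegree n, Nat.lt_succ_of_le (min_le_right _ _)⟩ : Fin (n + 1)),
       (fun j : Fin n => if (j : ℕ) < p.1.natDegree then p.1.coeff j
         else p.2.coeff ((j : ℕ) - p.1.natDegree))))
    (s := s) (t := Finset.univ (α := Fin (n + 1) × (Fin n → Fq)))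
    (fun p _ => Finset.mem_univ _) ?_
  · calc s.card ≤ Fintype.card (Fin (n + 1) × (Fin n → Fq)) := by
          simpa using h
      _ = (n + 1) * Fintype.card Fq ^ n := by
          simp [Fintype.card_prod, Fintype.card_fun]
  · intro p hp p' hp' he
    obtain ⟨h1, h2, h3⟩ := hs p hp
    obtain ⟨h1', h2', h3'⟩ := hs p' hp'
    have hdle : p.1.natDegree ≤ n := le_trans (Nat.le_add_right _ _) h3.le
    have hdle' : p'.1.natDegree ≤ n := le_trans (Nat.le_add_right _ _) h3'.le
    have hd : p.1.natDegree = p'.1.natDegree := by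
      have := congrArg Prod.fst he
      simpa [Fin.ext_iff, min_eq_left hdle, min_eq_left hdle'] using this
    have hfun : ∀ j : Fin n, (if (j : ℕ) < p.1.natDegree then p.1.coeff j
        else p.2.coeff ((j : ℕ) - p.1.natDegree)) =
        (if (j : ℕ) < p'.1.natDegree then p'.1.coeff j
        else p'.2.coeff ((j : ℕ) - p'.1.natDegree)) := fun j => congrFun (congrArg Prod.snd he) j
    set d := p.1.natDegree with hdd
    have ha : p.1 = p'.1 := by
      ext i
      rcases lt_trichotomy i d with hi | hi | hi
      · have hin : i < n := lt_of_lt_of_le hi hdle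
        have := hfun ⟨i, hin⟩
        simpa [hi, ← hd, hi] using this
      · subst hi
        have e1 : p.1.coeff d = 1 := by rw [hdd]; exact h1.coeff_natDegree
        have e2 : p'.1.coeff d = 1 := by rw [hd]; exact h1'.coeff_natDegree
        rw [e1, e2]
      · rw [coeff_eq_zero_of_natDegree_lt (by omega), coeff_eq_zero_of_natDegree_lt (by omega)]
    have hdb : p.2.natDegree = n - d := by omega
    have hdb' : p'.2.natDegree = n - d := by rw [← hd] at h3'; omega
    have hb : p.2 = p'.2 := by
      ext i
      rcases lt_trichotomy i (n - d) with hi | hi | hi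
      · have hin : d + i < n := by omega
        have := hfun ⟨d + i, hin⟩
        simpa [← hd, Nat.add_sub_cancel_left] using this
      · subst hi
        rw [show p.2.coeff (n - d) = 1 from hdb ▸ Monic.coeff_natDegree h2,
          show p'.2.coeff (n - d) = 1 from hdb' ▸ Monic.coeff_natDegree h2']
      · rw [coeff_eq_zero_of_natDegree_lt (by omega), coeff_eq_zero_of_natDegree_lt (by omega)]
    exact Prod.ext ha hb

lemma DEaux.quadChar_eq_one {g X : ℕ} (hXg : X ≤ g) {P : Fq[X]}
    (hP : P.Monic ∧ Irreducible P ∧ P.natDegree = 2 * g + 1) {f : Fq[X]}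
    (hf : f.Monic) (hdeg : f.natDegree ≤ 2 * X) (hsq : IsSquare f) :
    quadChar P f = 1 := by
  obtain ⟨u, rfl⟩ := hsq
  have hu : u ≠ 0 := left_ne_zero_of_mul hf.ne_zero
  have hdu : u.natDegree + u.natDegree ≤ 2 * X := by
    rw [← Polynomial.natDegree_mul hu hu]; exact hdeg
  have ndvd : ¬ P ∣ u * u := by
    intro hdvd
    have hPp : Prime P := hP.2.1.prime
    have hPu : P ∣ u := (hPp.2.2 u u hdvd).elim id id
    have := Polynomial.natDegree_le_of_dvd hPu hu
    omega
  rw [quadChar, if_neg ndvd, if_pos ⟨Ideal.Quotient.mk _ u, map_mul _ u u⟩]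

lemma DEaux.sum_squares_eq (hodd : Odd (Fintype.card Fq)) (X : ℕ) (val : Fq[X] → ℝ) :
    ∑ f ∈ (DEaux.finite_monic_le (Fq := Fq) (2 * X)).toFinset.filter (fun f => IsSquare f), val f
      = ∑ h ∈ (DEaux.finite_monic_le (Fq := Fq) X).toFinset, val (h ^ 2) := by
  have hchar : ((-1 : Fq)) ≠ 1 := by
    apply Ring.neg_one_ne_one_of_char_ne_two
    intro h2
    have := FiniteField.even_card_iff_char_two.mp h2
    rw [Nat.odd_iff] at hodd
    omega
  symm
  apply Finset.sum_bij (i := fun h _ => h ^ 2)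
  · intro h hh
    rw [Set.Finite.mem_toFinset] at hh
    rw [Finset.mem_filter, Set.Finite.mem_toFinset]
    refine ⟨⟨hh.1.pow _, ?_⟩, ⟨h, sq h⟩⟩
    have := hh.2
    rw [natDegree_pow]; omega
  · intro a ha b hb hab
    rw [Set.Finite.mem_toFinset] at ha hb
    have hz : (a - b) * (a + b) = 0 := by
      have h0 : a ^ 2 - b ^ 2 = 0 := by rw [hab, sub_self]
      calc (a - b) * (a + b) = a ^ 2 - b ^ 2 := by ring
        _ = 0 := h0
    rcases mul_eq_zero.mp hz with h | h
    · exact sub_eq_zero.mp h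
    · exfalso
      have hab' : a = -b := by linear_combination h
      have : a.leadingCoeff = -(b.leadingCoeff) := by rw [hab', leadingCoeff_neg]
      rw [ha.1.leadingCoeff, hb.1.leadingCoeff] at this
      exact hchar this.symm
  · intro f hf
    rw [Finset.mem_filter, Set.Finite.mem_toFinset] at hf
    obtain ⟨⟨hmon, hdeg⟩, u, rfl⟩ := hf
    have hu : u ≠ 0 := left_ne_zero_of_mul hmon.ne_zero
    have hdu : u.natDegree ≤ X := by
      have := Polynomial.natDegree_mul hu hu
      omega
    have hlc : u.leadingCoeff * u.leadingCoeff = 1 := by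
      rw [← leadingCoeff_mul]; exact hmon.leadingCoeff
    rcases mul_self_eq_one_iff.mp hlc with h1 | h1
    · exact ⟨u, Set.Finite.mem_toFinset _ |>.mpr ⟨h1, hdu⟩, (sq u)⟩
    · refine ⟨-u, Set.Finite.mem_toFinset _ |>.mpr ⟨?_, by rwa [natDegree_neg]⟩, ?_⟩
      · show (-u).leadingCoeff = 1
        rw [leadingCoeff_neg, h1, neg_neg]
      · rw [neg_pow, sq u]; ring
  · intro h hh; rfl

end Aux
theorem diagonal_evaluation {Fq : Type} [Field Fq] [Fintype Fq]
    (hq : Odd (Fintype.card Fq)) (C : ℝ) (hC : 0 < C)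
    (hWeil : ∀ (g : ℕ) (f : Fq[X]), f.Monic → ¬IsSquare f →
      |(1 / (Nat.card {P : Fq[X] // P.Monic ∧ Irreducible P ∧ P.natDegree = 2 * g + 1} : ℝ))
          * ∑' P : {P : Fq[X] // P.Monic ∧ Irreducible P ∧ P.natDegree = 2 * g + 1},
              quadChar (P : Fq[X]) f|
        ≤ C * (Fintype.card Fq : ℝ) ^ (-(g : ℤ)) * (f.natDegree : ℝ)) :
    ∃ D : ℝ, ∀ g X : ℕ, 1 ≤ X → X ≤ g →
      |(1 / (Nat.card {P : Fq[X] // P.Monic ∧ Irreducible P ∧ P.natDegree = 2 * g + 1} : ℝ))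
            * ∑' P : {P : Fq[X] // P.Monic ∧ Irreducible P ∧ P.natDegree = 2 * g + 1},
                ∑' f : {f : Fq[X] // f.Monic ∧ f.natDegree ≤ 2 * X},
                  (tau (f : Fq[X]) : ℝ) * quadChar (P : Fq[X]) (f : Fq[X])
                    / Real.sqrt ((Fintype.card Fq : ℝ) ^ (f : Fq[X]).natDegree)
          - ∑' f : {f : Fq[X] // f.Monic ∧ f.natDegree ≤ X},
              (tau ((f : Fq[X]) ^ 2) : ℝ) / (Fintype.card Fq : ℝ) ^ (f : Fq[X]).natDegree|
        ≤ D * (X : ℝ) ^ 2 * (Fintype.card Fq : ℝ) ^ ((X : ℤ) - (g : ℤ)) := by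
  classical
  refine ⟨18 * C, ?_⟩
  intro g X hX1 hXg
  set qR : ℝ := (Fintype.card Fq : ℝ) with hqR
  have hq2 : 1 < Fintype.card Fq := Fintype.one_lt_card
  have hq3 : 3 ≤ Fintype.card Fq := by
    rw [Nat.odd_iff] at hq; omega
  have hq0 : (0 : ℝ) < qR := by
    rw [hqR]; exact_mod_cast Nat.lt_of_lt_of_le Nat.zero_lt_one hq2.le
  have hq3R : (3 : ℝ) ≤ qR := by rw [hqR]; exact_mod_cast hq3
  set r : ℝ := Real.sqrt qR with hrdef
  have hr2 : r ^ 2 = qR := Real.sq_sqrt hq0.le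
  have hr0 : 0 ≤ r := Real.sqrt_nonneg _
  have hr15 : (3 / 2 : ℝ) ≤ r := by nlinarith [hr2, hr0]
  have hr1 : (1 : ℝ) < r := by linarith
  have hX1R : (1 : ℝ) ≤ (X : ℝ) := by exact_mod_cast hX1
  -- finite sets
  have hPfin := DEaux.finite_P (Fq := Fq) g
  have hF2 := DEaux.finite_monic_le (Fq := Fq) (2 * X)
  have hF1 := DEaux.finite_monic_le (Fq := Fq) X
  set Pfin := hPfin.toFinset with hPfinDef
  set F2 := hF2.toFinset with hF2Def
  set F1 := hF1.toFinset with hF1Def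
  have hPne : Pfin.Nonempty := by
    obtain ⟨P, hP⟩ := DEaux.exists_monic_irreducible_natDegree Fq (2 * g + 1) (by omega)
    exact ⟨P, hPfin.mem_toFinset.mpr hP⟩
  have hNnat : 0 < Pfin.card := Finset.card_pos.mpr hPne
  set N : ℝ := (Pfin.card : ℝ) with hNdef
  have hN0 : (0 : ℝ) < N := by rw [hNdef]; exact_mod_cast hNnat
  have hNcard : (Nat.card {P : Fq[X] // P.Monic ∧ Irreducible P ∧ P.natDegree = 2 * g + 1} : ℝ)
      = N := by rw [DEaux.natcard_eq_card hPfin, hNdef]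
  have hs_eq : ∀ f : Fq[X], Real.sqrt (qR ^ f.natDegree) = r ^ f.natDegree := by
    intro f
    rw [← hr2, ← pow_mul, mul_comm 2 f.natDegree, pow_mul,
      Real.sqrt_sq (by positivity)]
  -- rewrite tsums as finite sums
  have e1 : (∑' P : {P : Fq[X] // P.Monic ∧ Irreducible P ∧ P.natDegree = 2 * g + 1},
        ∑' f : {f : Fq[X] // f.Monic ∧ f.natDegree ≤ 2 * X},
          (tau (f : Fq[X]) : ℝ) * quadChar (P : Fq[X]) (f : Fq[X])
            / Real.sqrt (qR ^ (f : Fq[X]).natDegree))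
      = ∑ P ∈ Pfin, ∑ f ∈ F2,
          (tau f : ℝ) * quadChar P f / Real.sqrt (qR ^ f.natDegree) := by
    refine (DEaux.tsumSub_eq_sum hPfin
      (fun P => ∑' f : {f : Fq[X] // f.Monic ∧ f.natDegree ≤ 2 * X},
        (tau (f : Fq[X]) : ℝ) * quadChar P (f : Fq[X])
          / Real.sqrt (qR ^ (f : Fq[X]).natDegree))).trans ?_
    refine Finset.sum_congr rfl (fun P _ => ?_)
    exact DEaux.tsumSub_eq_sum hF2
      (fun f => (tau f : ℝ) * quadChar P f / Real.sqrt (qR ^ f.natDegree))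
  have e2 : (∑' f : {f : Fq[X] // f.Monic ∧ f.natDegree ≤ X},
        (tau ((f : Fq[X]) ^ 2) : ℝ) / qR ^ (f : Fq[X]).natDegree)
      = ∑ h ∈ F1, (tau (h ^ 2) : ℝ) / qR ^ h.natDegree :=
    DEaux.tsumSub_eq_sum hF1 (fun h => (tau (h ^ 2) : ℝ) / qR ^ h.natDegree)
  rw [hNcard, e1, e2]
  set A : ℝ := ∑ h ∈ F1, (tau (h ^ 2) : ℝ) / qR ^ h.natDegree with hAdef
  set F2ns := F2.filter (fun f => ¬ IsSquare f) with hF2nsDef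
  -- splitting of the inner sum
  have inner : ∀ P ∈ Pfin, (∑ f ∈ F2,
        (tau f : ℝ) * quadChar P f / Real.sqrt (qR ^ f.natDegree))
      = A + ∑ f ∈ F2ns, (tau f : ℝ) * quadChar P f / Real.sqrt (qR ^ f.natDegree) := by
    intro P hP
    rw [← Finset.sum_filter_add_sum_filter_not F2 (fun f => IsSquare f)]
    congr 1
    have hPmem := hPfin.mem_toFinset.mp hP
    have hstep : ∀ f ∈ F2.filter (fun f => IsSquare f),
        (tau f : ℝ) * quadChar P f / Real.sqrt (qR ^ f.natDegree)
          = (tau f : ℝ) / Real.sqrt (qR ^ f.natDegree) := by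
      intro f hf
      rw [Finset.mem_filter, hF2.mem_toFinset] at hf
      rw [DEaux.quadChar_eq_one hXg hPmem hf.1.1 hf.1.2 hf.2, mul_one]
    rw [Finset.sum_congr rfl hstep,
      DEaux.sum_squares_eq hq X (fun f => (tau f : ℝ) / Real.sqrt (qR ^ f.natDegree))]
    apply Finset.sum_congr rfl
    intro h hh
    rw [hs_eq, natDegree_pow, pow_mul, hr2]
  have hsplit : (1 / N) * (∑ P ∈ Pfin, ∑ f ∈ F2,
        (tau f : ℝ) * quadChar P f / Real.sqrt (qR ^ f.natDegree)) - A
      = (1 / N) * ∑ P ∈ Pfin, ∑ f ∈ F2ns,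
          (tau f : ℝ) * quadChar P f / Real.sqrt (qR ^ f.natDegree) := by
    rw [Finset.sum_congr rfl inner, Finset.sum_add_distrib, Finset.sum_const, nsmul_eq_mul,
      ← hNdef]
    field_simp
    ring
  rw [hsplit]
  have hswap : (∑ P ∈ Pfin, ∑ f ∈ F2ns,
        (tau f : ℝ) * quadChar P f / Real.sqrt (qR ^ f.natDegree))
      = ∑ f ∈ F2ns, ((tau f : ℝ) / Real.sqrt (qR ^ f.natDegree)) * ∑ P ∈ Pfin, quadChar P f := by
    rw [Finset.sum_comm]
    refine Finset.sum_congr rfl (fun f _ => ?_)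
    rw [Finset.mul_sum]
    exact Finset.sum_congr rfl (fun P _ => by ring)
  rw [hswap, Finset.mul_sum]
  -- per-term bound via the Weil hypothesis
  have hterm : ∀ f ∈ F2ns,
      |1 / N * (((tau f : ℝ) / Real.sqrt (qR ^ f.natDegree)) * ∑ P ∈ Pfin, quadChar P f)|
        ≤ ((tau f : ℝ) / Real.sqrt (qR ^ f.natDegree)) * (C * qR ^ (-(g : ℤ)) * (2 * X)) := by
    intro f hf
    rw [hF2nsDef, Finset.mem_filter, hF2.mem_toFinset] at hf
    have hW := hWeil g f hf.1.1 hf.2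
    have hconv : (∑' P : {P : Fq[X] // P.Monic ∧ Irreducible P ∧ P.natDegree = 2 * g + 1},
        quadChar (P : Fq[X]) f) = ∑ P ∈ Pfin, quadChar P f :=
      DEaux.tsumSub_eq_sum hPfin (fun P => quadChar P f)
    rw [hNcard, hconv] at hW
    have hsq0 : (0 : ℝ) < Real.sqrt (qR ^ f.natDegree) := by
      rw [hs_eq]; positivity
    have hcf : (0 : ℝ) ≤ (tau f : ℝ) / Real.sqrt (qR ^ f.natDegree) := by positivity
    have heq : |1 / N * (((tau f : ℝ) / Real.sqrt (qR ^ f.natDegree)) * ∑ P ∈ Pfin, quadChar P f)|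
        = ((tau f : ℝ) / Real.sqrt (qR ^ f.natDegree)) * |1 / N * ∑ P ∈ Pfin, quadChar P f| := by
      rw [show 1 / N * (((tau f : ℝ) / Real.sqrt (qR ^ f.natDegree)) * ∑ P ∈ Pfin, quadChar P f)
          = ((tau f : ℝ) / Real.sqrt (qR ^ f.natDegree)) * (1 / N * ∑ P ∈ Pfin, quadChar P f)
          by ring, abs_mul, abs_of_nonneg hcf]
    rw [heq]
    have hdf : (f.natDegree : ℝ) ≤ 2 * (X : ℝ) := by exact_mod_cast hf.1.2
    calc ((tau f : ℝ) / Real.sqrt (qR ^ f.natDegree)) * |1 / N * ∑ P ∈ Pfin, quadChar P f|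
        ≤ ((tau f : ℝ) / Real.sqrt (qR ^ f.natDegree)) * (C * qR ^ (-(g : ℤ)) * (f.natDegree : ℝ)) :=
          mul_le_mul_of_nonneg_left hW hcf
      _ ≤ ((tau f : ℝ) / Real.sqrt (qR ^ f.natDegree)) * (C * qR ^ (-(g : ℤ)) * (2 * X)) := by
          refine mul_le_mul_of_nonneg_left ?_ hcf
          refine mul_le_mul_of_nonneg_left hdf ?_
          positivity
  -- tau sum equals pair sum
  set T := ((F2 ×ˢ F2).filter (fun p : Fq[X] × Fq[X] => (p.1 * p.2).natDegree ≤ 2 * X))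
    with hTdef
  have hTmem : ∀ p ∈ T, p.1.Monic ∧ p.2.Monic ∧ p.1.natDegree + p.2.natDegree ≤ 2 * X := by
    intro p hp
    rw [hTdef, Finset.mem_filter, Finset.mem_product, hF2.mem_toFinset, hF2.mem_toFinset] at hp
    have h1 := hp.1.1.1
    have h2 := hp.1.2.1
    refine ⟨h1, h2, ?_⟩
    have h3 := hp.2
    rwa [Polynomial.natDegree_mul h1.ne_zero h2.ne_zero] at h3
  have hmaps : ∀ p ∈ T, p.1 * p.2 ∈ F2 := by
    intro p hp
    obtain ⟨h1, h2, h3⟩ := hTmem p hp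
    rw [hF2.mem_toFinset]
    exact ⟨h1.mul h2, by rwa [Polynomial.natDegree_mul h1.ne_zero h2.ne_zero]⟩
  have hfib : ∀ f ∈ F2, (tau f : ℝ)
      = ((T.filter (fun p : Fq[X] × Fq[X] => p.1 * p.2 = f)).card : ℝ) := by
    intro f hf
    rw [hF2.mem_toFinset] at hf
    congr 1
    rw [tau, Nat.card_congr (Equiv.subtypeEquivRight (q := fun p : Fq[X] × Fq[X] =>
      p ∈ T.filter (fun p : Fq[X] × Fq[X] => p.1 * p.2 = f)) ?_), Nat.card_eq_finsetCard]
    intro p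
    constructor
    · rintro ⟨h1, h2, h3⟩
      have hdsum : p.1.natDegree + p.2.natDegree = f.natDegree := by
        rw [← Polynomial.natDegree_mul h1.ne_zero h2.ne_zero, h3]
      have hfd := hf.2
      have hd1 : p.1.natDegree ≤ 2 * X := by omega
      have hd2 : p.2.natDegree ≤ 2 * X := by omega
      have hdm : (p.1 * p.2).natDegree ≤ 2 * X := by
        rw [Polynomial.natDegree_mul h1.ne_zero h2.ne_zero]; omega
      simp only [Finset.mem_filter, hTdef, hF2Def, Finset.mem_product, Set.Finite.mem_toFinset,
        Set.mem_setOf_eq]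
      tauto
    · intro hp
      simp only [Finset.mem_filter, hTdef, hF2Def, Finset.mem_product, Set.Finite.mem_toFinset,
        Set.mem_setOf_eq] at hp
      tauto
  have hpairsum : (∑ f ∈ F2, (tau f : ℝ) / Real.sqrt (qR ^ f.natDegree))
      = ∑ p ∈ T, 1 / Real.sqrt (qR ^ (p.1 * p.2).natDegree) := by
    rw [← Finset.sum_fiberwise_of_maps_to hmaps
      (fun p : Fq[X] × Fq[X] => 1 / Real.sqrt (qR ^ (p.1 * p.2).natDegree))]
    refine Finset.sum_congr rfl (fun f hf => ?_)
    have hsub : ∀ p ∈ T.filter (fun p : Fq[X] × Fq[X] => p.1 * p.2 = f),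
        1 / Real.sqrt (qR ^ (p.1 * p.2).natDegree) = 1 / Real.sqrt (qR ^ f.natDegree) := by
      intro p hp
      rw [(Finset.mem_filter.mp hp).2]
    rw [Finset.sum_congr rfl hsub, Finset.sum_const, nsmul_eq_mul, hfib f hf]
    ring
  -- bound the pair sum
  have hcount : (∑ p ∈ T, 1 / Real.sqrt (qR ^ (p.1 * p.2).natDegree))
      ≤ (2 * (X : ℝ) + 1) * (3 * qR ^ X) := by
    have hmaps2 : ∀ p ∈ T, p.1.natDegree + p.2.natDegree ∈ Finset.range (2 * X + 1) := by
      intro p hp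
      rw [Finset.mem_range]
      have := (hTmem p hp).2.2
      omega
    rw [← Finset.sum_fiberwise_of_maps_to hmaps2
      (fun p : Fq[X] × Fq[X] => 1 / Real.sqrt (qR ^ (p.1 * p.2).natDegree))]
    have hinner : ∀ n ∈ Finset.range (2 * X + 1),
        (∑ p ∈ T.filter (fun p : Fq[X] × Fq[X] => p.1.natDegree + p.2.natDegree = n),
          1 / Real.sqrt (qR ^ (p.1 * p.2).natDegree)) ≤ ((n : ℝ) + 1) * r ^ n := by
      intro n hn
      have hsub : ∀ p ∈ T.filter (fun p : Fq[X] × Fq[X] => p.1.natDegree + p.2.natDegree = n),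
          1 / Real.sqrt (qR ^ (p.1 * p.2).natDegree) = (r ^ n)⁻¹ := by
        intro p hp
        rw [Finset.mem_filter] at hp
        obtain ⟨h1, h2, _⟩ := hTmem p hp.1
        rw [hs_eq, Polynomial.natDegree_mul h1.ne_zero h2.ne_zero, hp.2, one_div]
      rw [Finset.sum_congr rfl hsub, Finset.sum_const, nsmul_eq_mul]
      have hcard := DEaux.card_pairs_le
        (T.filter (fun p : Fq[X] × Fq[X] => p.1.natDegree + p.2.natDegree = n)) n
        (fun p hp => by
          obtain ⟨h1, h2, _⟩ := hTmem p (Finset.mem_filter.mp hp).1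
          exact ⟨h1, h2, (Finset.mem_filter.mp hp).2⟩)
      have hcardR : ((T.filter (fun p : Fq[X] × Fq[X] =>
          p.1.natDegree + p.2.natDegree = n)).card : ℝ) ≤ ((n : ℝ) + 1) * qR ^ n := by
        rw [hqR]
        exact_mod_cast hcard
      calc ((T.filter (fun p : Fq[X] × Fq[X] =>
            p.1.natDegree + p.2.natDegree = n)).card : ℝ) * (r ^ n)⁻¹
          ≤ (((n : ℝ) + 1) * qR ^ n) * (r ^ n)⁻¹ := by
            refine mul_le_mul_of_nonneg_right hcardR ?_
            positivity
        _ = ((n : ℝ) + 1) * r ^ n := by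
            rw [← hr2, ← pow_mul, mul_comm 2 n, pow_mul]
            have hrn : (0:ℝ) < r ^ n := by positivity
            field_simp
    have hgeo : (∑ n ∈ Finset.range (2 * X + 1), r ^ n) ≤ 3 * r ^ (2 * X) := by
      rw [geom_sum_eq (ne_of_gt hr1)]
      rw [div_le_iff₀ (by linarith : (0:ℝ) < r - 1)]
      have hpow : r ^ (2 * X + 1) = r ^ (2 * X) * r := pow_succ r (2 * X)
      have hp2 : (1:ℝ) ≤ r ^ (2 * X) := one_le_pow₀ hr1.le
      nlinarith [hpow, hp2, hr15]
    calc (∑ n ∈ Finset.range (2 * X + 1),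
          ∑ p ∈ T.filter (fun p : Fq[X] × Fq[X] => p.1.natDegree + p.2.natDegree = n),
            1 / Real.sqrt (qR ^ (p.1 * p.2).natDegree))
        ≤ ∑ n ∈ Finset.range (2 * X + 1), ((n : ℝ) + 1) * r ^ n :=
          Finset.sum_le_sum hinner
      _ ≤ ∑ n ∈ Finset.range (2 * X + 1), (2 * (X : ℝ) + 1) * r ^ n := by
          refine Finset.sum_le_sum (fun n hn => ?_)
          refine mul_le_mul_of_nonneg_right ?_ (by positivity)
          rw [Finset.mem_range] at hn
          have hn' : n ≤ 2 * X := by omega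
          have hnr : (n : ℝ) ≤ ((2 * X : ℕ) : ℝ) := by exact_mod_cast hn'
          push_cast at hnr
          linarith
      _ = (2 * (X : ℝ) + 1) * ∑ n ∈ Finset.range (2 * X + 1), r ^ n := by
          rw [Finset.mul_sum]
      _ ≤ (2 * (X : ℝ) + 1) * (3 * r ^ (2 * X)) := by
          refine mul_le_mul_of_nonneg_left hgeo ?_
          positivity
      _ = (2 * (X : ℝ) + 1) * (3 * qR ^ X) := by
          rw [pow_mul, hr2]
  -- final chain
  have hzp : qR ^ (-(g : ℤ)) * qR ^ X = qR ^ ((X : ℤ) - (g : ℤ)) := by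
    rw [← zpow_natCast qR X, ← zpow_add₀ (ne_of_gt hq0)]
    congr 1
    ring
  calc |∑ f ∈ F2ns, 1 / N * (((tau f : ℝ) / Real.sqrt (qR ^ f.natDegree))
          * ∑ P ∈ Pfin, quadChar P f)|
      ≤ ∑ f ∈ F2ns, |1 / N * (((tau f : ℝ) / Real.sqrt (qR ^ f.natDegree))
          * ∑ P ∈ Pfin, quadChar P f)| := Finset.abs_sum_le_sum_abs _ _
    _ ≤ ∑ f ∈ F2ns, ((tau f : ℝ) / Real.sqrt (qR ^ f.natDegree))
          * (C * qR ^ (-(g : ℤ)) * (2 * X)) := Finset.sum_le_sum hterm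
    _ = (C * qR ^ (-(g : ℤ)) * (2 * X)) * ∑ f ∈ F2ns, (tau f : ℝ)
          / Real.sqrt (qR ^ f.natDegree) := by
        rw [← Finset.sum_mul, mul_comm]
    _ ≤ (C * qR ^ (-(g : ℤ)) * (2 * X)) * ∑ f ∈ F2, (tau f : ℝ)
          / Real.sqrt (qR ^ f.natDegree) := by
        refine mul_le_mul_of_nonneg_left ?_ (by positivity)
        refine Finset.sum_le_sum_of_subset_of_nonneg (Finset.filter_subset _ _) ?_
        intro f _ _
        positivity
    _ = (C * qR ^ (-(g : ℤ)) * (2 * X)) * ∑ p ∈ T, 1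
          / Real.sqrt (qR ^ (p.1 * p.2).natDegree) := by rw [hpairsum]
    _ ≤ (C * qR ^ (-(g : ℤ)) * (2 * X)) * ((2 * (X : ℝ) + 1) * (3 * qR ^ X)) := by
        refine mul_le_mul_of_nonneg_left hcount ?_
        positivity
    _ ≤ 18 * C * (X : ℝ) ^ 2 * qR ^ ((X : ℤ) - (g : ℤ)) := by
        have hre : (C * qR ^ (-(g : ℤ)) * (2 * X)) * ((2 * (X : ℝ) + 1) * (3 * qR ^ X))
            = (C * (2 * (X : ℝ)) * ((2 * (X : ℝ) + 1) * 3)) * (qR ^ (-(g : ℤ)) * qR ^ X) := by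
          ring
        rw [hre, hzp]
        refine mul_le_mul_of_nonneg_right ?_ (by positivity)
        have hxx : (X : ℝ) ≤ (X : ℝ) ^ 2 := by nlinarith [hX1R]
        nlinarith [mul_le_mul_of_nonneg_left hxx hC.le, hC, hX1R]
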